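/- Let g be a finite-dimensional real Lie algebra with a nice basis (e_1, …, e_n). If V and W are subspaces of g each spanned by a subset of the basis (i.e. V = span{e_i : i ∈ s} and W = span{e_i : i ∈ t} for some subsets s, t of {1,…,n}), then the subspace ⁅V, W⁆ spanned by all brackets ⁅v, w⁆ with v ∈ V, w ∈ W is also spanned by a subset of the basis: there is a subset u of {1,…,n} with ⁅V, W⁆ = span{e_i : i ∈ u}. -/

import Mathlib

/-- The structure constants of a basis of a real Lie algebra:
`structConst b i j k` is the coefficient of `b k` in `⁅b i, b j⁆`. -/
noncomputable def structConst {g : Type*} [LieRing g] [LieAlgebra ℝ g] {n : ℕ}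
    (b : Module.Basis (Fin n) ℝ g) (i j k : Fin n) : ℝ :=
  b.repr ⁅b i, b j⁆ k

/-- A basis of a real Lie algebra is *nice* if each bracket of two basis elements is a
multiple of a single basis element, and for all `i, k` there is at most one `j` such that
the coefficient of `b k` in `⁅b i, b j⁆` is nonzero. -/
def IsNiceBasis {g : Type*} [LieRing g] [LieAlgebra ℝ g] {n : ℕ}
    (b : Module.Basis (Fin n) ℝ g) : Prop :=
  (∀ i j, ∃ (k : Fin n) (c : ℝ), ⁅b i, b j⁆ = c • b k) ∧
  (∀ i k j j', structConst b i j k ≠ 0 → structConst b i j' k ≠ 0 → j = j')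

/-- If `V` and `W` are subspaces adapted to a nice basis, then the subspace spanned by
all brackets `⁅v, w⁆`, `v ∈ V`, `w ∈ W` is also adapted to the basis. -/
theorem bracket_of_adapted_is_adapted (g : Type*) [LieRing g] [LieAlgebra ℝ g]
    [FiniteDimensional ℝ g] {n : ℕ} (b : Module.Basis (Fin n) ℝ g) (hb : IsNiceBasis b)
    (s t : Set (Fin n)) :
    ∃ u : Set (Fin n),
      Submodule.span ℝ {x : g | ∃ v ∈ Submodule.span ℝ (⇑b '' s),
        ∃ w ∈ Submodule.span ℝ (⇑b '' t), x = ⁅v, w⁆}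
      = Submodule.span ℝ (⇑b '' u) := by
  classical
  set u : Set (Fin n) := {k | ∃ i ∈ s, ∃ j ∈ t, b.repr ⁅b i, b j⁆ k ≠ 0} with hu
  have hgen : ∀ i ∈ s, ∀ j ∈ t, ⁅b i, b j⁆ ∈ Submodule.span ℝ (⇑b '' u) := by
    intro i hi j hj
    obtain ⟨k, c, hc⟩ := hb.1 i j
    by_cases h0 : c = 0
    · simp [hc, h0]
    · have hk : k ∈ u := by
        refine ⟨i, hi, j, hj, ?_⟩
        simp [hc, h0]
      rw [hc]
      exact Submodule.smul_mem _ _ (Submodule.subset_span ⟨k, hk, rfl⟩)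
  refine ⟨u, le_antisymm ?_ ?_⟩
  · rw [Submodule.span_le]
    rintro x ⟨v, hv, w, hw, rfl⟩
    have key : ∀ v ∈ Submodule.span ℝ (⇑b '' s), ∀ w ∈ Submodule.span ℝ (⇑b '' t),
        ⁅v, w⁆ ∈ Submodule.span ℝ (⇑b '' u) := by
      intro v hv
      induction hv using Submodule.span_induction with
      | mem x hx =>
        obtain ⟨i, hi, rfl⟩ := hx
        intro w hw
        induction hw using Submodule.span_induction with
        | mem y hy =>
          obtain ⟨j, hj, rfl⟩ := hy
          exact hgen i hi j hj
        | zero => simp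
        | add y z _ _ hy hz => rw [lie_add]; exact Submodule.add_mem _ hy hz
        | smul c y _ hy => rw [lie_smul]; exact Submodule.smul_mem _ _ hy
      | zero => intro w hw; simp
      | add y z _ _ hy hz =>
        intro w hw; rw [add_lie]; exact Submodule.add_mem _ (hy w hw) (hz w hw)
      | smul c y _ hy =>
        intro w hw; rw [smul_lie]; exact Submodule.smul_mem _ _ (hy w hw)
    exact key v hv w hw
  · rw [Submodule.span_le]
    rintro x ⟨k, hk, rfl⟩
    obtain ⟨i, hi, j, hj, hne⟩ := hk
    obtain ⟨k', c, hc⟩ := hb.1 i j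
    have hrepr : b.repr ⁅b i, b j⁆ k = Finsupp.single k' c k := by
      simp [hc, Finsupp.smul_single]
    rw [hrepr] at hne
    have hkk : k' = k := by
      by_contra h
      simp [Finsupp.single_apply, h] at hne
    rw [hkk] at hc
    rw [hkk, Finsupp.single_eq_same] at hne
    have hbk : b k = c⁻¹ • ⁅b i, b j⁆ := by
      rw [hc, smul_smul, inv_mul_cancel₀ hne, one_smul]
    rw [hbk]
    refine Submodule.smul_mem _ _ (Submodule.subset_span ?_)
    exact ⟨b i, Submodule.subset_span ⟨i, hi, rfl⟩, b j,
      Submodule.subset_span ⟨j, hj, rfl⟩, rfl⟩
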